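/- Let Δ be an irreducible root system with highest root θ and dual Coxeter number h*. Then the number of positive roots γ with (θ, γ) > 0 equals 2h* − 3. -/

import Mathlib

open scoped RealInnerProductSpace
open scoped Classical

/-- An (irreducible, reduced, crystallographic) root system in a real inner product
space `V`, together with a choice of base (simple roots), coordinate functions with
respect to the base, and fundamental weights. -/
structure RootSystemData (V : Type*) [NormedAddCommGroup V] [InnerProductSpace ℝ V] where
  Δ : Finset V
  base : Finset V
  base_sub : base ⊆ Δ
  root_ne_zero : ∀ γ ∈ Δ, γ ≠ 0
  span_eq_top : Submodule.span ℝ (Δ : Set V) = ⊤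
  reflect_mem : ∀ γ ∈ Δ, ∀ δ ∈ Δ, δ - (2 * ⟪δ, γ⟫ / ⟪γ, γ⟫) • γ ∈ Δ
  crystallographic : ∀ γ ∈ Δ, ∀ δ ∈ Δ, ∃ k : ℤ, 2 * ⟪δ, γ⟫ / ⟪γ, γ⟫ = (k : ℝ)
  reduced : ∀ γ ∈ Δ, (2 : ℝ) • γ ∉ Δ
  coord : V → V → ℝ
  coord_add : ∀ α x y, coord (x + y) α = coord x α + coord y α
  coord_smul : ∀ α (c : ℝ) (x : V), coord (c • x) α = c * coord x α
  coord_base : ∀ α ∈ base, ∀ β ∈ base, coord β α = if β = α then 1 else 0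
  root_decomp : ∀ γ ∈ Δ, γ = ∑ α ∈ base, coord γ α • α
  pos_or_neg : ∀ γ ∈ Δ, (∀ α ∈ base, 0 ≤ coord γ α) ∨ (∀ α ∈ base, coord γ α ≤ 0)
  coord_int : ∀ γ ∈ Δ, ∀ α ∈ base, ∃ k : ℤ, coord γ α = (k : ℝ)
  irreducible : ∀ S ⊆ Δ, S.Nonempty →
    (∀ γ ∈ S, ∀ δ ∈ Δ, δ ∉ S → ⟪γ, δ⟫ = 0) → S = Δ
  fw : V → V
  fw_spec : ∀ α ∈ base, ∀ β ∈ base, ⟪fw α, β⟫ = if β = α then ⟪α, α⟫ / 2 else 0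

namespace RootSystemData

variable {V : Type*} [NormedAddCommGroup V] [InnerProductSpace ℝ V]

/-- The set of positive roots (nonnegative coordinates w.r.t. the base). -/
noncomputable def posRoots (R : RootSystemData V) : Finset V :=
  R.Δ.filter fun γ => ∀ α ∈ R.base, 0 ≤ R.coord γ α

/-- The height of a root: the sum of its coordinates in the base. -/
noncomputable def ht (R : RootSystemData V) (γ : V) : ℝ :=
  ∑ α ∈ R.base, R.coord γ α

/-- The height of the coroot `γ^∨` in the dual root system. -/
noncomputable def dualHt (R : RootSystemData V) (γ : V) : ℝ :=
  ∑ α ∈ R.base, R.coord γ α * ⟪α, α⟫ / ⟪γ, γ⟫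

/-- `R_α`: the set of roots having positive inner product with the fundamental
weight `ϖ_α`. -/
noncomputable def Rset (R : RootSystemData V) (α : V) : Finset V :=
  R.Δ.filter fun γ => 0 < ⟪γ, R.fw α⟫

/-- `Δ_α(i)`: the set of roots whose coefficient of `α` equals `i`. -/
noncomputable def level (R : RootSystemData V) (α : V) (i : ℤ) : Finset V :=
  R.Δ.filter fun γ => R.coord γ α = (i : ℝ)

namespace Aux

variable {V : Type*} [NormedAddCommGroup V] [InnerProductSpace ℝ V]

lemma inner_self_pos' (R : RootSystemData V) {γ : V} (hγ : γ ∈ R.Δ) : 0 < ⟪γ, γ⟫ :=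
  lt_of_le_of_ne real_inner_self_nonneg (Ne.symm (inner_self_ne_zero.2 (R.root_ne_zero γ hγ)))

lemma coord_neg (R : RootSystemData V) (α x : V) : R.coord (-x) α = - R.coord x α := by
  have := R.coord_smul α (-1) x
  simpa using this

lemma coord_sub_smul (R : RootSystemData V) (α x y : V) (c : ℝ) :
    R.coord (x - c • y) α = R.coord x α - c * R.coord y α := by
  rw [sub_eq_add_neg, R.coord_add, ← neg_smul, R.coord_smul]; ring

lemma neg_mem (R : RootSystemData V) {γ : V} (hγ : γ ∈ R.Δ) : -γ ∈ R.Δ := by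
  have h := R.reflect_mem γ hγ γ hγ
  have hne : ⟪γ, γ⟫ ≠ 0 := (inner_self_pos' R hγ).ne'
  have h2 : (2 * ⟪γ, γ⟫ / ⟪γ, γ⟫ : ℝ) = 2 := by field_simp
  rw [h2] at h
  have h3 : γ - (2 : ℝ) • γ = -γ := by module
  rwa [h3] at h

lemma mem_posRoots {R : RootSystemData V} {γ : V} :
    γ ∈ R.posRoots ↔ γ ∈ R.Δ ∧ ∀ α ∈ R.base, 0 ≤ R.coord γ α := by
  simp [RootSystemData.posRoots]

lemma base_mem_posRoots (R : RootSystemData V) {α : V} (hα : α ∈ R.base) :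
    α ∈ R.posRoots := by
  refine mem_posRoots.2 ⟨R.base_sub hα, fun β hβ => ?_⟩
  rw [R.coord_base β hβ α hα]
  split <;> norm_num

/-- A positive root different from a simple root `α` has a positive coordinate at some
simple root other than `α`. -/
lemma exists_pos_coord_ne (R : RootSystemData V) {γ α : V} (hγ : γ ∈ R.posRoots)
    (hα : α ∈ R.base) (hne : γ ≠ α) :
    ∃ β ∈ R.base, β ≠ α ∧ 0 < R.coord γ β := by
  obtain ⟨hγΔ, hγpos⟩ := mem_posRoots.1 hγ
  by_contra hcon
  push_neg at hcon
  have hzero : ∀ β ∈ R.base, β ≠ α → R.coord γ β = 0 := fun β hβ hβα =>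
    le_antisymm (hcon β hβ hβα) (hγpos β hβ)
  -- then γ = (coord γ α) • α
  have hdecomp : γ = R.coord γ α • α := by
    conv_lhs => rw [R.root_decomp γ hγΔ]
    rw [Finset.sum_eq_single α (fun β hβ hβα => by rw [hzero β hβ hβα, zero_smul])
      (fun h => (h hα).elim)]
  obtain ⟨k, hk⟩ := R.coord_int γ hγΔ α hα
  have hαΔ : α ∈ R.Δ := R.base_sub hα
  have hαα : (0:ℝ) < ⟪α, α⟫ := inner_self_pos' R hαΔ
  have hkne : R.coord γ α ≠ 0 := by
    intro h0
    exact R.root_ne_zero γ hγΔ (by rw [hdecomp, h0, zero_smul])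
  have hkpos : 0 < R.coord γ α := lt_of_le_of_ne (hγpos α hα) (Ne.symm hkne)
  obtain ⟨m, hm⟩ := R.crystallographic γ hγΔ α hαΔ
  -- compute : 2 ⟪α,γ⟫ / ⟪γ,γ⟫ = 2 / t with t = coord γ α
  set t := R.coord γ α with ht
  have hinner1 : ⟪α, γ⟫ = t * ⟪α, α⟫ := by rw [hdecomp]; rw [real_inner_smul_right]
  have hinner2 : ⟪γ, γ⟫ = t * (t * ⟪α, α⟫) := by
    conv_lhs => rw [hdecomp]
    rw [real_inner_smul_left, real_inner_smul_right]
  rw [hinner1, hinner2] at hm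
  have hmt : (m : ℝ) * t = 2 := by
    have htA : t * ⟪α, α⟫ ≠ 0 := mul_ne_zero hkne hαα.ne'
    have hm' : 2 * (t * ⟪α, α⟫) = (m : ℝ) * (t * (t * ⟪α, α⟫)) := by
      field_simp at hm
      linear_combination (t * ⟪α, α⟫) * hm
    have : 2 * (t * ⟪α, α⟫) = ((m : ℝ) * t) * (t * ⟪α, α⟫) := by rw [hm']; ring
    have h2 : (2 : ℝ) = (m : ℝ) * t := mul_right_cancel₀ htA this
    linarith
  -- now in integers
  have hk0 : 0 < k := by
    have : (0:ℝ) < (k:ℝ) := hk ▸ hkpos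
    exact_mod_cast this
  have hmk : m * k = 2 := by
    have : (m : ℝ) * (k : ℝ) = 2 := by rw [← hk]; exact hmt
    exact_mod_cast this
  have hk1 : 1 ≤ k := hk0
  have hm1 : 1 ≤ m := by
    rcases lt_or_ge 0 m with h | h
    · exact h
    · exfalso
      have : m * k ≤ 0 := mul_nonpos_of_nonpos_of_nonneg h (by omega)
      omega
  have hk2 : k ≤ 2 := by nlinarith
  interval_cases k
  · -- k = 1 : γ = α, contradiction
    exact hne (by rw [hdecomp, hk]; norm_num)
  · -- k = 2 : contradicts reducedness
    exact R.reduced α hαΔ (by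
      have : γ = (2:ℝ) • α := by rw [hdecomp, hk]; norm_num
      rwa [this] at hγΔ)

section Theta

variable {R : RootSystemData V} {θ : V}

lemma theta_coord_ge_one (hθ : θ ∈ R.Δ)
    (hθmax : ∀ γ ∈ R.Δ, ∀ β ∈ R.base, R.coord γ β ≤ R.coord θ β)
    {α : V} (hα : α ∈ R.base) : 1 ≤ R.coord θ α := by
  have h := hθmax α (R.base_sub hα) α hα
  rwa [R.coord_base α hα α hα, if_pos rfl] at h

lemma theta_mem_posRoots (hθ : θ ∈ R.Δ)
    (hθmax : ∀ γ ∈ R.Δ, ∀ β ∈ R.base, R.coord γ β ≤ R.coord θ β) :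
    θ ∈ R.posRoots :=
  mem_posRoots.2 ⟨hθ, fun α hα => le_trans zero_le_one (theta_coord_ge_one hθ hθmax hα)⟩

/-- No positive root has negative inner product with the highest root. -/
lemma inner_theta_nonneg (hθ : θ ∈ R.Δ)
    (hθmax : ∀ γ ∈ R.Δ, ∀ β ∈ R.base, R.coord γ β ≤ R.coord θ β)
    {γ : V} (hγ : γ ∈ R.posRoots) : 0 ≤ ⟪θ, γ⟫ := by
  by_contra hneg
  push_neg at hneg
  obtain ⟨hγΔ, hγpos⟩ := mem_posRoots.1 hγ
  obtain ⟨k, hk⟩ := R.crystallographic θ hθ γ hγΔ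
  have hθθ : (0:ℝ) < ⟪θ, θ⟫ := inner_self_pos' R hθ
  have hγθ : ⟪γ, θ⟫ < 0 := by rw [real_inner_comm]; exact hneg
  have hkneg : (k:ℝ) < 0 := by
    rw [← hk]
    exact div_neg_of_neg_of_pos (by linarith) hθθ
  have hkle : (k:ℝ) ≤ -1 := by
    have h1 : k < 0 := by exact_mod_cast hkneg
    have h2 : k ≤ -1 := by omega
    exact_mod_cast h2
  have hmem := R.reflect_mem θ hθ γ hγΔ
  rw [hk] at hmem
  have hzero : ∀ α ∈ R.base, R.coord γ α = 0 := by
    intro α hα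
    have h1 := hθmax _ hmem α hα
    rw [coord_sub_smul] at h1
    have h2 := theta_coord_ge_one hθ hθmax hα
    have h3 := hγpos α hα
    nlinarith
  exact R.root_ne_zero γ hγΔ (by
    rw [R.root_decomp γ hγΔ]
    exact Finset.sum_eq_zero fun α hα => by rw [hzero α hα, zero_smul])

/-- A positive root `γ ≠ θ` with `(θ, γ) > 0` satisfies `⟨γ, θ^∨⟩ = 1`. -/
lemma pairing_eq_one (hθ : θ ∈ R.Δ)
    (hθmax : ∀ γ ∈ R.Δ, ∀ β ∈ R.base, R.coord γ β ≤ R.coord θ β)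
    {γ : V} (hγ : γ ∈ R.posRoots) (hne : γ ≠ θ) (hpos : 0 < ⟪θ, γ⟫) :
    ⟪γ, θ⟫ = ⟪θ, θ⟫ / 2 := by
  obtain ⟨hγΔ, hγpos⟩ := mem_posRoots.1 hγ
  obtain ⟨k, hk⟩ := R.crystallographic θ hθ γ hγΔ
  have hθθ : (0:ℝ) < ⟪θ, θ⟫ := inner_self_pos' R hθ
  have hγθ : 0 < ⟪γ, θ⟫ := by rw [real_inner_comm]; exact hpos
  have hkpos : (0:ℝ) < (k:ℝ) := by
    rw [← hk]; positivity
  have hk1 : 1 ≤ k := by exact_mod_cast hkpos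
  have hmem := R.reflect_mem θ hθ γ hγΔ
  rw [hk] at hmem
  have hmem' : (k:ℝ) • θ - γ ∈ R.Δ := by
    have := neg_mem R hmem
    rwa [neg_sub] at this
  by_cases hk2 : 2 ≤ k
  · exfalso
    have hk2' : (2:ℝ) ≤ (k:ℝ) := by exact_mod_cast hk2
    have heq : ∀ α ∈ R.base, R.coord γ α = R.coord θ α := by
      intro α hα
      have h1 := hθmax _ hmem' α hα
      have hcoord : R.coord ((k:ℝ) • θ - γ) α = (k:ℝ) * R.coord θ α - R.coord γ α := by
        rw [sub_eq_add_neg, R.coord_add, R.coord_smul, coord_neg]; ring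
      rw [hcoord] at h1
      have h2 := theta_coord_ge_one hθ hθmax hα
      have h3 := hθmax γ hγΔ α hα
      nlinarith
    exact hne (by
      rw [R.root_decomp γ hγΔ, R.root_decomp θ hθ]
      exact Finset.sum_congr rfl fun α hα => by rw [heq α hα])
  · have hkeq : k = 1 := by omega
    rw [hkeq] at hk
    push_cast at hk
    field_simp at hk ⊢
    linarith

/-- Key summation: for each simple root `α`, the sum of `⟪γ, α⟫` over positive roots
equals `⟪α, α⟫`. -/
lemma sum_inner_posRoots (R : RootSystemData V) {α : V} (hα : α ∈ R.base) :
    ∑ γ ∈ R.posRoots, ⟪γ, α⟫ = ⟪α, α⟫ := by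
  classical
  have hαΔ : α ∈ R.Δ := R.base_sub hα
  have hαα : (0:ℝ) < ⟪α, α⟫ := inner_self_pos' R hαΔ
  have hαpos : α ∈ R.posRoots := base_mem_posRoots R hα
  have herase : ∑ γ ∈ R.posRoots.erase α, ⟪γ, α⟫ = 0 := by
    apply Finset.sum_involution (fun γ _ => γ - (2 * ⟪γ, α⟫ / ⟪α, α⟫) • α)
    · -- f γ + f (g γ) = 0
      intro γ hγ
      rw [inner_sub_left, real_inner_smul_left]
      field_simp
      ring
    · -- g γ ≠ γ when inner ≠ 0
      intro γ hγ hfne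
      intro habs
      have : (2 * ⟪γ, α⟫ / ⟪α, α⟫) • α = 0 := by
        have := sub_eq_self.1 habs
        exact this
      rcases smul_eq_zero.1 this with h | h
      · have h' : ⟪γ, α⟫ = 0 := by
          rcases div_eq_zero_iff.1 h with h1 | h2
          · linarith
          · exact absurd h2 hαα.ne'
        exact hfne h'
      · exact R.root_ne_zero α hαΔ h
    · -- membership
      intro γ hγmem
      have hγpr : γ ∈ R.posRoots := Finset.mem_of_mem_erase hγmem
      have hγne : γ ≠ α := Finset.ne_of_mem_erase hγmem
      obtain ⟨hγΔ, hγpos⟩ := mem_posRoots.1 hγpr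
      obtain ⟨β₀, hβ₀, hβ₀ne, hβ₀pos⟩ := exists_pos_coord_ne R hγpr hα hγne
      have hmemΔ : γ - (2 * ⟪γ, α⟫ / ⟪α, α⟫) • α ∈ R.Δ := R.reflect_mem α hαΔ γ hγΔ
      have hcoordother : ∀ β ∈ R.base, β ≠ α →
          R.coord (γ - (2 * ⟪γ, α⟫ / ⟪α, α⟫) • α) β = R.coord γ β := by
        intro β hβ hβα
        rw [coord_sub_smul, R.coord_base β hβ α hα, if_neg (fun h => hβα h.symm), mul_zero,
          sub_zero]
      have hcβ₀ : 0 < R.coord (γ - (2 * ⟪γ, α⟫ / ⟪α, α⟫) • α) β₀ := by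
        rw [hcoordother β₀ hβ₀ hβ₀ne]; exact hβ₀pos
      have hposmem : γ - (2 * ⟪γ, α⟫ / ⟪α, α⟫) • α ∈ R.posRoots := by
        refine mem_posRoots.2 ⟨hmemΔ, ?_⟩
        rcases R.pos_or_neg _ hmemΔ with h | h
        · exact h
        · exact absurd (h β₀ hβ₀) (by linarith)
      refine Finset.mem_erase.2 ⟨?_, hposmem⟩
      intro habs
      rw [habs, R.coord_base β₀ hβ₀ α hα, if_neg (fun h => hβ₀ne h.symm)] at hcβ₀
      exact lt_irrefl 0 hcβ₀
    · -- involution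
      intro γ hγ
      have hinner : ⟪γ - (2 * ⟪γ, α⟫ / ⟪α, α⟫) • α, α⟫ = - ⟪γ, α⟫ := by
        rw [inner_sub_left, real_inner_smul_left]
        field_simp
        ring
      rw [hinner]
      module
  rw [← Finset.add_sum_erase _ _ hαpos, herase, add_zero]

end Theta

end Aux

end RootSystemData

/-- The number of positive roots `γ` with `(θ, γ) > 0`, where `θ` is the
highest root, equals `2h* − 3`, with `h*` the dual Coxeter number. -/
theorem card_pos_inner_highest_root
    {V : Type*} [NormedAddCommGroup V] [InnerProductSpace ℝ V]
    (R : RootSystemData V)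
    (θ : V) (hθ : θ ∈ R.Δ)
    (hθmax : ∀ γ ∈ R.Δ, ∀ β ∈ R.base, R.coord γ β ≤ R.coord θ β) :
    (((R.posRoots.filter fun γ => 0 < ⟪θ, γ⟫).card : ℝ)) = 2 * (R.dualHt θ + 1) - 3 := by
  classical
  open RootSystemData RootSystemData.Aux in
  set F := R.posRoots.filter fun γ => 0 < ⟪θ, γ⟫ with hF
  have hθθ : (0:ℝ) < ⟪θ, θ⟫ := inner_self_pos' R hθ
  have hθpr : θ ∈ R.posRoots := theta_mem_posRoots hθ hθmax
  have hθF : θ ∈ F := Finset.mem_filter.2 ⟨hθpr, hθθ⟩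
  -- total sum over positive roots
  have htotal : ∑ γ ∈ R.posRoots, ⟪γ, θ⟫ = ∑ α ∈ R.base, R.coord θ α * ⟪α, α⟫ := by
    have hstep : ∀ γ ∈ R.posRoots, ⟪γ, θ⟫ = ∑ α ∈ R.base, R.coord θ α * ⟪γ, α⟫ := by
      intro γ _
      conv_lhs => rw [R.root_decomp θ hθ]
      rw [inner_sum]
      exact Finset.sum_congr rfl fun α _ => by rw [real_inner_smul_right]
    rw [Finset.sum_congr rfl hstep, Finset.sum_comm]
    exact Finset.sum_congr rfl fun α hα => by
      rw [← Finset.mul_sum, sum_inner_posRoots R hα]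
  -- split the sum over the filter
  have hsplit : ∑ γ ∈ R.posRoots, ⟪γ, θ⟫ = ∑ γ ∈ F, ⟪γ, θ⟫ := by
    rw [hF, Finset.sum_filter]
    refine (Finset.sum_congr rfl fun γ hγ => ?_).symm
    split_ifs with h
    · rfl
    · push_neg at h
      have h0 : ⟪θ, γ⟫ = 0 := le_antisymm h (inner_theta_nonneg hθ hθmax hγ)
      rw [real_inner_comm]
      exact h0.symm
  -- evaluate the filtered sum
  have hFsum : ∑ γ ∈ F, ⟪γ, θ⟫ = ⟪θ, θ⟫ + ((F.card : ℝ) - 1) * (⟪θ, θ⟫ / 2) := by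
    rw [← Finset.add_sum_erase _ _ hθF]
    congr 1
    have hconst : ∀ γ ∈ F.erase θ, ⟪γ, θ⟫ = ⟪θ, θ⟫ / 2 := by
      intro γ hγ
      have hγne : γ ≠ θ := Finset.ne_of_mem_erase hγ
      have hγF : γ ∈ F := Finset.mem_of_mem_erase hγ
      obtain ⟨hγpr, hγpos⟩ := Finset.mem_filter.1 hγF
      exact pairing_eq_one hθ hθmax hγpr hγne hγpos
    rw [Finset.sum_congr rfl hconst, Finset.sum_const, Finset.card_erase_of_mem hθF]
    rw [nsmul_eq_mul]
    congr 1
    have h1 : 1 ≤ F.card := Finset.card_pos.2 ⟨θ, hθF⟩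
    push_cast [Nat.cast_sub h1]
    ring
  -- the dual Coxeter height
  have hdual : R.dualHt θ = (∑ α ∈ R.base, R.coord θ α * ⟪α, α⟫) / ⟪θ, θ⟫ := by
    rw [RootSystemData.dualHt, Finset.sum_div]
  have hkey : ⟪θ, θ⟫ + ((F.card : ℝ) - 1) * (⟪θ, θ⟫ / 2)
      = R.dualHt θ * ⟪θ, θ⟫ := by
    rw [hdual, div_mul_cancel₀ _ hθθ.ne', ← htotal, hsplit, hFsum]
  have hne : (⟪θ, θ⟫ : ℝ) ≠ 0 := hθθ.ne'
  have : ((F.card : ℝ)) = 2 * R.dualHt θ - 1 := by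
    field_simp at hkey
    nlinarith [hkey]
  rw [this]; ring
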